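/- Let f : H → ℝ be convex and continuously differentiable with L-Lipschitz gradient on a real Hilbert space H. Then for all x, y ∈ H and 0 < s ≤ 1/L: f(y - s∇f(y)) ≤ f(x) + ⟨∇f(y), y - x⟩ - (s/2)‖∇f(y)‖² - (s/2)‖∇f(x) - ∇f(y)‖². -/

import Mathlib

open Set RealInnerProductSpace

private lemma pathDeriv {H : Type*} [NormedAddCommGroup H] [InnerProductSpace ℝ H] [CompleteSpace H]
    (f : H → ℝ) (f' : H → H) (hf : ∀ y, HasGradientAt f (f' y) y) (a b : H) (t : ℝ) :
    HasDerivAt (fun u : ℝ => f (a + u • (b - a))) ⟪f' (a + t • (b - a)), b - a⟫ t := by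
  have hc : HasDerivAt (fun u : ℝ => a + u • (b - a)) (b - a) t := by
    simpa using ((hasDerivAt_id t).smul_const (b - a)).const_add a
  have := ((hf (a + t • (b - a))).hasFDerivAt).comp_hasDerivAt t hc
  simpa [InnerProductSpace.toDual_apply_apply, Function.comp_def] using this

private lemma firstOrder {H : Type*} [NormedAddCommGroup H] [InnerProductSpace ℝ H]
    [CompleteSpace H]
    (f : H → ℝ) (f' : H → H) (hf : ∀ y, HasGradientAt f (f' y) y)
    (hconv : ConvexOn ℝ univ f) (a b : H) :
    f a + ⟪f' a, b - a⟫ ≤ f b := by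
  set g : ℝ → ℝ := fun u => f (a + u • (b - a)) with hg
  have hgc : ConvexOn ℝ univ g := by
    have := hconv.comp_affineMap (AffineMap.lineMap a b : ℝ →ᵃ[ℝ] H)
    simp only [preimage_univ] at this
    suffices hh : g = f ∘ (AffineMap.lineMap a b : ℝ →ᵃ[ℝ] H) by rw [hh]; exact this
    funext u
    simp only [hg, Function.comp_apply, AffineMap.lineMap_apply_module]
    congr 1
    module
  have hd : HasDerivAt g ⟪f' a, b - a⟫ 0 := by
    simpa using pathDeriv f f' hf a b 0
  have hkey := hgc.le_slope_of_hasDerivAt (mem_univ (0:ℝ)) (mem_univ (1:ℝ)) one_pos hd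
  have hslope : slope g 0 1 = g 1 - g 0 := by simp [slope_def_field]
  have hg1 : g 1 = f b := by simp [hg]
  have hg0 : g 0 = f a := by simp [hg]
  rw [hslope, hg1, hg0] at hkey
  linarith

private lemma descentLemma {H : Type*} [NormedAddCommGroup H] [InnerProductSpace ℝ H]
    [CompleteSpace H]
    (f : H → ℝ) (f' : H → H) (hf : ∀ y, HasGradientAt f (f' y) y)
    (L : ℝ) (hL : 0 ≤ L) (hlip : LipschitzWith (Real.toNNReal L) f') (a b : H) :
    f b ≤ f a + ⟪f' a, b - a⟫ + L / 2 * ‖b - a‖ ^ 2 := by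
  set c : ℝ → H := fun u => a + u • (b - a) with hc
  set G : ℝ → ℝ := fun u => ⟪f' (c u), b - a⟫ with hG
  have hcont : Continuous G := by
    have : Continuous c := by continuity
    exact (Continuous.inner (hlip.continuous.comp this) continuous_const)
  have hderiv : ∀ t ∈ uIcc (0:ℝ) 1, HasDerivAt (fun u : ℝ => f (c u)) (G t) t :=
    fun t _ => pathDeriv f f' hf a b t
  have hint : IntervalIntegrable G MeasureTheory.volume 0 1 := hcont.intervalIntegrable 0 1
  have hftc : ∫ t in (0:ℝ)..1, G t = f (c 1) - f (c 0) :=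
    intervalIntegral.integral_eq_sub_of_hasDerivAt hderiv hint
  have hc0 : c 0 = a := by simp [hc]
  have hc1 : c 1 = b := by simp [hc]
  have hbound : ∀ t ∈ Icc (0:ℝ) 1, G t ≤ ⟪f' a, b - a⟫ + L * t * ‖b - a‖ ^ 2 := by
    intro t ht
    have h1 : G t - ⟪f' a, b - a⟫ = ⟪f' (c t) - f' a, b - a⟫ := by
      simp [hG, inner_sub_left]
    have h2 : ⟪f' (c t) - f' a, b - a⟫ ≤ ‖f' (c t) - f' a‖ * ‖b - a‖ :=
      real_inner_le_norm _ _
    have h3 : ‖f' (c t) - f' a‖ ≤ L * ‖c t - a‖ := by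
      have := hlip.dist_le_mul (c t) a
      rwa [dist_eq_norm, dist_eq_norm, Real.coe_toNNReal L hL] at this
    have h4 : ‖c t - a‖ = t * ‖b - a‖ := by
      simp [hc, norm_smul, abs_of_nonneg ht.1]
    rw [h4] at h3
    have h5 : ‖f' (c t) - f' a‖ * ‖b - a‖ ≤ L * t * ‖b - a‖ ^ 2 := by
      calc ‖f' (c t) - f' a‖ * ‖b - a‖ ≤ (L * (t * ‖b - a‖)) * ‖b - a‖ :=
            mul_le_mul_of_nonneg_right h3 (norm_nonneg _)
        _ = L * t * ‖b - a‖ ^ 2 := by ring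
    linarith
  have hintR : IntervalIntegrable (fun t => ⟪f' a, b - a⟫ + L * t * ‖b - a‖ ^ 2)
      MeasureTheory.volume 0 1 := by
    apply Continuous.intervalIntegrable; continuity
  have hmono : ∫ t in (0:ℝ)..1, G t ≤
      ∫ t in (0:ℝ)..1, (⟪f' a, b - a⟫ + L * t * ‖b - a‖ ^ 2) :=
    intervalIntegral.integral_mono_on zero_le_one hint hintR hbound
  have hrhs : ∫ t in (0:ℝ)..1, (⟪f' a, b - a⟫ + L * t * ‖b - a‖ ^ 2)
      = ⟪f' a, b - a⟫ + L / 2 * ‖b - a‖ ^ 2 := by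
    rw [intervalIntegral.integral_add (by apply Continuous.intervalIntegrable; continuity)
      (by apply Continuous.intervalIntegrable; continuity)]
    have : ∫ t in (0:ℝ)..1, L * t * ‖b - a‖ ^ 2
        = ∫ t in (0:ℝ)..1, (L * ‖b - a‖ ^ 2) * t := by
      congr 1; funext t; ring
    rw [this, intervalIntegral.integral_const_mul, integral_id]
    simp; ring
  rw [hftc, hc0, hc1] at hmono
  rw [hrhs] at hmono
  linarith

theorem stmt_12 {H : Type*} [NormedAddCommGroup H] [InnerProductSpace ℝ H] [CompleteSpace H]
    (f : H → ℝ) (f' : H → H)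
    (hf : ∀ y, HasGradientAt f (f' y) y)
    (hconv : ConvexOn ℝ univ f)
    (L : ℝ) (hL : 0 < L)
    (hlip : LipschitzWith (Real.toNNReal L) f')
    (s : ℝ) (hs0 : 0 < s) (hs : s ≤ 1 / L) :
    ∀ x y : H,
      f (y - s • f' y) ≤ f x + ⟪f' y, y - x⟫ - (s / 2) * ‖f' y‖ ^ 2
        - (s / 2) * ‖f' x - f' y‖ ^ 2 := by
  intro x y
  have hsL : s * L ≤ 1 := by
    rw [le_div_iff₀ hL] at hs; linarith
  -- Step 1: descent step at y
  have step1 : f (y - s • f' y) ≤ f y - s / 2 * ‖f' y‖ ^ 2 := by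
    have := descentLemma f f' hf L hL.le hlip y (y - s • f' y)
    have he : (y - s • f' y) - y = -(s • f' y) := by abel
    rw [he] at this
    have hin : ⟪f' y, -(s • f' y)⟫ = -(s * ‖f' y‖ ^ 2) := by
      rw [inner_neg_right, real_inner_smul_right, real_inner_self_eq_norm_sq]
    have hn : ‖-(s • f' y)‖ ^ 2 = s ^ 2 * ‖f' y‖ ^ 2 := by
      rw [norm_neg, norm_smul]; simp [abs_of_nonneg hs0.le]; ring
    rw [hin, hn] at this
    nlinarith [sq_nonneg ‖f' y‖, sq_nonneg s]
  -- Step 2: cocoercivity  f y ≤ f x + ⟪f' y, y - x⟫ - 1/(2L) ‖f' x - f' y‖²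
  have step2 : f y ≤ f x + ⟪f' y, y - x⟫ - 1 / (2 * L) * ‖f' x - f' y‖ ^ 2 := by
    set g : H → ℝ := fun z => f z - ⟪f' y, z⟫ with hgdef
    set g' : H → H := fun z => f' z - f' y with hg'def
    have hg : ∀ z, HasGradientAt g (g' z) z := by
      intro z
      have h1 : HasFDerivAt f (InnerProductSpace.toDual ℝ H (f' z)) z := (hf z).hasFDerivAt
      have h2 : HasFDerivAt (fun w : H => ⟪f' y, w⟫)
          (InnerProductSpace.toDual ℝ H (f' y)) z :=
        (InnerProductSpace.toDual ℝ H (f' y)).hasFDerivAt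
      have := h1.sub h2
      have heq : InnerProductSpace.toDual ℝ H (f' z) - InnerProductSpace.toDual ℝ H (f' y)
          = InnerProductSpace.toDual ℝ H (g' z) := by
        rw [hg'def]; simp [map_sub]
      rw [heq] at this
      have h3 := this.hasGradientAt
      simp only [LinearIsometryEquiv.symm_apply_apply] at h3
      exact h3
    have hgconv : ConvexOn ℝ univ g := by
      refine ⟨convex_univ, fun p _ q _ a b ha hb hab => ?_⟩
      have := hconv.2 (mem_univ p) (mem_univ q) ha hb hab
      simp only [smul_eq_mul] at this ⊢
      simp only [hgdef]
      rw [inner_add_right, real_inner_smul_right, real_inner_smul_right]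
      linarith [this]
    have hglip : LipschitzWith (Real.toNNReal L) g' := by
      refine LipschitzWith.of_dist_le_mul fun p q => ?_
      have := hlip.dist_le_mul p q
      simpa [hg'def, dist_sub_right] using this
    -- first-order at y : g y ≤ g z for all z since g' y = 0
    have hg'y : g' y = 0 := by simp [hg'def]
    set z : H := x - (1 / L) • (f' x - f' y) with hz
    have hfo : g y + ⟪g' y, z - y⟫ ≤ g z := firstOrder g g' hg hgconv y z
    rw [hg'y] at hfo
    simp only [inner_zero_left, add_zero] at hfo
    have hdesc : g z ≤ g x + ⟪g' x, z - x⟫ + L / 2 * ‖z - x‖ ^ 2 :=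
      descentLemma g g' hg L hL.le hglip x z
    have hzx : z - x = -((1 / L) • (f' x - f' y)) := by rw [hz]; abel
    have hin : ⟪g' x, z - x⟫ = -(1 / L) * ‖f' x - f' y‖ ^ 2 := by
      rw [hzx, hg'def, inner_neg_right, real_inner_smul_right, real_inner_self_eq_norm_sq]
      show -(1 / L * ‖f' x - f' y‖ ^ 2) = _
      ring
    have hnz : ‖z - x‖ ^ 2 = (1 / L) ^ 2 * ‖f' x - f' y‖ ^ 2 := by
      rw [hzx, norm_neg, norm_smul]
      rw [Real.norm_eq_abs, abs_of_pos (by positivity : (0:ℝ) < 1 / L)]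
      ring
    rw [hin, hnz] at hdesc
    have hkey : g y ≤ g x - 1 / (2 * L) * ‖f' x - f' y‖ ^ 2 := by
      have hLne : L ≠ 0 := hL.ne'
      have heq : -(1/L) * ‖f' x - f' y‖ ^ 2 + L / 2 * ((1/L)^2 * ‖f' x - f' y‖ ^ 2)
          = -(1 / (2 * L) * ‖f' x - f' y‖ ^ 2) := by field_simp; ring
      calc g y ≤ g z := hfo
        _ ≤ g x + (-(1/L) * ‖f' x - f' y‖ ^ 2 + L / 2 * ((1/L)^2 * ‖f' x - f' y‖ ^ 2)) := by
            linarith [hdesc]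
        _ = g x + -(1 / (2 * L) * ‖f' x - f' y‖ ^ 2) := by rw [heq]
        _ = g x - 1 / (2 * L) * ‖f' x - f' y‖ ^ 2 := by ring
    simp only [hgdef] at hkey
    have hiny : ⟪f' y, y⟫ - ⟪f' y, x⟫ = ⟪f' y, y - x⟫ := (inner_sub_right _ _ _).symm
    linarith [hkey, hiny]
  -- combine
  have hhalf : s / 2 ≤ 1 / (2 * L) := by
    rw [div_le_div_iff₀ (by norm_num) (by positivity)]
    nlinarith
  have hnn : (0:ℝ) ≤ ‖f' x - f' y‖ ^ 2 := sq_nonneg _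
  nlinarith [step1, step2, mul_le_mul_of_nonneg_right hhalf hnn]
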